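/- arXiv:2008.03524 — 2 statements merged into one kernel-verified Lean document; each statement's English description precedes it below -/
import Mathlib

section
/- For every nonnegative integer n and complex t with |t| < 1, the regularized Gauss hypergeometric function satisfies ₂F̃₁(1/2, 1; 1 - n; t) = ((1/2)_n / √(1-t)) · (t/(1-t))^n. -/
open scoped BigOperators

/-- Pochhammer symbol `(a)_k` on `ℂ`. -/
noncomputable def pochC (a : ℂ) (k : ℕ) : ℂ := ∏ i ∈ Finset.range k, (a + i)

lemma pochC_zero (a : ℂ) : pochC a 0 = 1 := by simp [pochC]

lemma pochC_succ (a : ℂ) (k : ℕ) : pochC a (k + 1) = pochC a k * (a + k) :=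
  Finset.prod_range_succ _ _

lemma pochC_add (a : ℂ) (n m : ℕ) : pochC a (n + m) = pochC a n * pochC (a + n) m := by
  rw [pochC, pochC, pochC, Finset.prod_range_add]
  congr 1
  refine Finset.prod_congr rfl fun i _ => ?_
  push_cast
  ring

lemma pochC_one (k : ℕ) : pochC 1 k = k.factorial := by
  induction k with
  | zero => simp [pochC]
  | succ k ih => rw [pochC_succ, ih, Nat.factorial_succ]; push_cast; ring

lemma summable_aux (a : ℂ) {x : ℝ} (hx0 : 0 ≤ x) (hx : x < 1) :
    Summable (fun m : ℕ => ‖pochC a m‖ / m.factorial * (m + 1) * x ^ m) := by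
  set f : ℕ → ℝ := fun m => ‖pochC a m‖ / m.factorial * (m + 1) * x ^ m with hf
  set c : ℕ → ℝ := fun m => (1 + ‖a - 1‖ / (m + 1)) * (((m:ℝ) + 2) / (m + 1)) * x with hc
  have hfnn : ∀ m, 0 ≤ f m := by intro m; positivity
  have key : ∀ m : ℕ, f (m + 1) ≤ c m * f m := by
    intro m
    have hm1 : (0:ℝ) < (m:ℝ) + 1 := by positivity
    have hfac : (0:ℝ) < (m.factorial : ℝ) := by positivity
    have h1 : ‖a + m‖ ≤ ((m:ℝ) + 1) + ‖a - 1‖ := by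
      have : a + m = (a - 1) + ((m:ℂ) + 1) := by ring
      rw [this]
      refine (norm_add_le _ _).trans ?_
      have : ‖(m:ℂ) + 1‖ = (m:ℝ) + 1 := by
        have : ((m:ℂ) + 1) = ((m + 1 : ℕ) : ℂ) := by push_cast; ring
        rw [this, Complex.norm_natCast]; push_cast; ring
      rw [this]; linarith
    have e1 : f (m + 1) = ‖pochC a m‖ * ‖a + m‖ / (((m:ℝ) + 1) * m.factorial)
        * ((m:ℝ) + 2) * (x ^ m * x) := by
      simp only [hf, pochC_succ, norm_mul, Nat.factorial_succ, pow_succ]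
      push_cast
      ring
    have e2 : c m * f m = ‖pochC a m‖ * (((m:ℝ) + 1) + ‖a - 1‖) / (((m:ℝ) + 1) * m.factorial)
        * ((m:ℝ) + 2) * (x ^ m * x) := by
      simp only [hc, hf]
      field_simp
    rw [e1, e2]
    gcongr
  have hcx : Filter.Tendsto c Filter.atTop (nhds x) := by
    have h0 : Filter.Tendsto (fun m : ℕ => 1 / ((m:ℝ) + 1)) Filter.atTop (nhds 0) :=
      tendsto_one_div_add_atTop_nhds_zero_nat
    have : Filter.Tendsto (fun m : ℕ => (1 + ‖a - 1‖ * (1 / ((m:ℝ) + 1))) *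
        ((1 + 1 / ((m:ℝ) + 1))) * x) Filter.atTop (nhds ((1 + ‖a - 1‖ * 0) * (1 + 0) * x)) := by
      exact (((tendsto_const_nhds.add (tendsto_const_nhds.mul h0)).mul
        (tendsto_const_nhds.add h0)).mul tendsto_const_nhds)
    simp only [mul_zero, add_zero, one_mul, mul_one] at this
    have hceq : c = fun m : ℕ => (1 + ‖a - 1‖ * (1 / ((m:ℝ) + 1))) * (1 + 1 / ((m:ℝ) + 1)) * x := by
      funext m
      have hm1 : ((m:ℝ) + 1) ≠ 0 := by positivity
      have h2 : ((m:ℝ) + 2) / ((m:ℝ) + 1) = 1 + 1 / ((m:ℝ) + 1) := by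
        field_simp
        ring
      simp only [hc]
      rw [h2, div_eq_mul_one_div ‖a - 1‖ ((m:ℝ) + 1)]
    rw [hceq]
    exact this
  refine summable_of_ratio_norm_eventually_le (r := (x + 1) / 2) (by linarith) ?_
  have hev : ∀ᶠ m in Filter.atTop, c m < (x + 1) / 2 :=
    hcx.eventually_lt_const (by linarith)
  filter_upwards [hev] with m hm
  rw [Real.norm_of_nonneg (hfnn _), Real.norm_of_nonneg (hfnn _)]
  calc f (m + 1) ≤ c m * f m := key m
    _ ≤ (x + 1) / 2 * f m := by
        have := hfnn m
        nlinarith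

lemma summable_binom (a : ℂ) {z : ℂ} (hz : ‖z‖ < 1) :
    Summable (fun m : ℕ => pochC a m / m.factorial * z ^ m) := by
  refine Summable.of_norm_bounded (summable_aux a (norm_nonneg z) hz) fun m => ?_
  rw [norm_mul, norm_div, norm_pow, Complex.norm_natCast]
  have h1 : (0:ℝ) ≤ ‖pochC a m‖ / m.factorial := by positivity
  have h2 : (0:ℝ) ≤ ‖z‖ ^ m := by positivity
  have h3 : (0:ℝ) ≤ (m:ℝ) := Nat.cast_nonneg m
  nlinarith [mul_nonneg h1 h2]

lemma binom_eq (a : ℂ) {t : ℂ} (ht : ‖t‖ < 1) :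
    (∑' m : ℕ, pochC a m / m.factorial * t ^ m) * (1 - t) ^ a = 1 := by
  set r : ℝ := (‖t‖ + 1) / 2 with hr
  have htnn : (0:ℝ) ≤ ‖t‖ := norm_nonneg t
  have hr0 : 0 < r := by positivity
  have hr1 : r < 1 := by rw [hr]; linarith
  have htr : ‖t‖ < r := by rw [hr]; linarith
  set g : ℂ → ℂ := fun z => ∑' m : ℕ, pochC a m / m.factorial * z ^ m with hg
  set g' : ℂ → ℂ := fun z => ∑' m : ℕ, pochC a m / m.factorial * (m * z ^ (m - 1)) with hg'
  set u : ℕ → ℝ := fun m => ‖pochC a m‖ / m.factorial * (m + 1) * r ^ m * r⁻¹ with hu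
  have hu_sum : Summable u := (summable_aux a (le_of_lt hr0) hr1).mul_right r⁻¹
  have hbound : ∀ (m : ℕ) (z : ℂ), z ∈ Metric.ball (0:ℂ) r →
      ‖pochC a m / m.factorial * (m * z ^ (m - 1))‖ ≤ u m := by
    intro m z hz
    rw [Metric.mem_ball, dist_zero_right] at hz
    rw [norm_mul, norm_mul, norm_pow, norm_div, Complex.norm_natCast, Complex.norm_natCast]
    match m with
    | 0 => simp; positivity
    | k + 1 =>
      have e : u (k + 1) = ‖pochC a (k+1)‖ / (k+1).factorial * ((k:ℝ) + 2) * r ^ k := by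
        rw [hu]
        push_cast
        rw [pow_succ]
        field_simp
        ring
      rw [e]
      push_cast
      have h1 : ‖z‖ ^ k ≤ r ^ k := pow_le_pow_left₀ (norm_nonneg z) (le_of_lt hz) k
      have h2 : (0:ℝ) ≤ ‖pochC a (k+1)‖ / (k+1).factorial := by positivity
      have h3 : ((k:ℝ) + 1) ≤ (k:ℝ) + 2 := by linarith
      calc ‖pochC a (k+1)‖ / ((k+1).factorial : ℝ) * (((k:ℝ) + 1) * ‖z‖ ^ k)
          ≤ ‖pochC a (k+1)‖ / ((k+1).factorial : ℝ) * (((k:ℝ) + 2) * r ^ k) := by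
            gcongr
        _ = ‖pochC a (k+1)‖ / ((k+1).factorial : ℝ) * ((k:ℝ) + 2) * r ^ k := by ring
  have hgd : ∀ y ∈ Metric.ball (0:ℂ) r, HasDerivAt g (g' y) y := by
    intro y hy
    refine hasDerivAt_tsum_of_isPreconnected (y₀ := (0:ℂ)) hu_sum Metric.isOpen_ball
      ((convex_ball (0:ℂ) r).isPreconnected) (fun m z _ => ?_) hbound ?_ ?_ hy
    · exact (hasDerivAt_pow m z).const_mul (pochC a m / m.factorial)
    · exact Metric.mem_ball_self hr0
    · exact summable_binom a (by norm_num)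
  have ode : ∀ y ∈ Metric.ball (0:ℂ) r, (1 - y) * g' y = a * g y := by
    intro y hy
    rw [Metric.mem_ball, dist_zero_right] at hy
    have hy1 : ‖y‖ < 1 := hy.trans hr1
    have Sg : Summable (fun m : ℕ => pochC a m / m.factorial * y ^ m) := summable_binom a hy1
    have Smz : Summable (fun m : ℕ => pochC a m / m.factorial * ((m:ℂ) * y ^ m)) := by
      refine Summable.of_norm_bounded (summable_aux a (norm_nonneg y) hy1) fun m => ?_
      rw [norm_mul, norm_mul, norm_div, norm_pow, Complex.norm_natCast, Complex.norm_natCast]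
      have h1 : (0:ℝ) ≤ ‖pochC a m‖ / m.factorial := by positivity
      have h2 : (0:ℝ) ≤ ‖y‖ ^ m := by positivity
      have h3 : (m:ℝ) ≤ (m:ℝ) + 1 := by linarith
      calc ‖pochC a m‖ / (m.factorial:ℝ) * ((m:ℝ) * ‖y‖ ^ m)
          ≤ ‖pochC a m‖ / (m.factorial:ℝ) * (((m:ℝ)+1) * ‖y‖ ^ m) := by gcongr
        _ = ‖pochC a m‖ / (m.factorial:ℝ) * ((m:ℝ)+1) * ‖y‖ ^ m := by ring
    have Sder : Summable (fun m : ℕ => pochC a m / m.factorial * ((m:ℂ) * y ^ (m - 1))) := by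
      apply Summable.of_norm_bounded hu_sum
      intro m
      exact hbound m y (by rwa [Metric.mem_ball, dist_zero_right])
    -- reindex g' y
    have e1 : g' y = ∑' m : ℕ, pochC a m / m.factorial * (((a + m) : ℂ) * y ^ m) := by
      simp only [hg']
      rw [Summable.tsum_eq_zero_add Sder]
      simp only [Nat.cast_zero, zero_mul, mul_zero, zero_add]
      refine tsum_congr fun m => ?_
      have hfac : ((m.factorial : ℂ)) ≠ 0 := by exact_mod_cast m.factorial_ne_zero
      have hm1 : ((m:ℂ) + 1) ≠ 0 := by
        exact_mod_cast (Nat.cast_ne_zero (R := ℂ)).mpr (Nat.succ_ne_zero m)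
      rw [pochC_succ, Nat.factorial_succ, Nat.add_sub_cancel]
      push_cast
      field_simp
    have e2 : ∀ m : ℕ, pochC a m / m.factorial * (((a + m) : ℂ) * y ^ m) =
        pochC a m / m.factorial * ((m:ℂ) * y ^ m) + a * (pochC a m / m.factorial * y ^ m) := by
      intro m; ring
    have e3 : g' y = (∑' m : ℕ, pochC a m / m.factorial * ((m:ℂ) * y ^ m)) + a * g y := by
      rw [e1]
      simp_rw [e2]
      rw [Summable.tsum_add Smz (Sg.mul_left a), tsum_mul_left]
    have e4 : y * g' y = ∑' m : ℕ, pochC a m / m.factorial * ((m:ℂ) * y ^ m) := by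
      simp only [hg']
      rw [← tsum_mul_left]
      refine tsum_congr fun m => ?_
      match m with
      | 0 => simp
      | k + 1 =>
        simp only [Nat.add_sub_cancel]
        rw [pow_succ]
        push_cast
        ring
    rw [sub_mul, one_mul, e4, e3]
    ring
  -- the function (1-z)^a * g z has zero derivative on the ball
  have hslit : ∀ y ∈ Metric.ball (0:ℂ) r, (1 - y) ∈ Complex.slitPlane := by
    intro y hy
    rw [Metric.mem_ball, dist_zero_right] at hy
    left
    have : y.re ≤ ‖y‖ := Complex.re_le_norm y
    simp only [Complex.sub_re, Complex.one_re]
    have := hy.trans hr1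
    linarith [this, Complex.re_le_norm y]
  set h : ℂ → ℂ := fun z => (1 - z) ^ a * g z with hh
  have hne : ∀ y ∈ Metric.ball (0:ℂ) r, (1 - y) ≠ 0 := by
    intro y hy
    rw [Metric.mem_ball, dist_zero_right] at hy
    intro hcon
    have : y = 1 := by linear_combination -hcon
    rw [this] at hy
    simp at hy
    linarith
  have hder : ∀ y ∈ Metric.ball (0:ℂ) r, HasDerivAt h 0 y := by
    intro y hy
    have hd1 : HasDerivAt (fun z : ℂ => (1 - z) ^ a) (a * (1 - y) ^ (a - 1) * (-1)) y := by
      have hid : HasDerivAt (fun z : ℂ => 1 - z) (-1) y := by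
        simpa using (hasDerivAt_id y).const_sub 1
      exact hid.cpow_const (hslit y hy)
    have hd := hd1.mul (hgd y hy)
    have hval : a * (1 - y) ^ (a - 1) * (-1) * g y + (1 - y) ^ a * g' y = 0 := by
      have hpow : (1 - y) ^ a = (1 - y) ^ (a - 1) * (1 - y) := by
        have h1 := Complex.cpow_add (x := 1 - y) (a - 1) 1 (hne y hy)
        rw [Complex.cpow_one] at h1
        rw [← h1]
        congr 1
        ring
      rw [hpow]
      have := ode y hy
      calc a * (1 - y) ^ (a - 1) * (-1) * g y + (1 - y) ^ (a - 1) * (1 - y) * g' y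
          = (1 - y) ^ (a - 1) * ((1 - y) * g' y - a * g y) := by ring
        _ = (1 - y) ^ (a - 1) * (a * g y - a * g y) := by rw [this]
        _ = 0 := by ring
    rw [hval] at hd
    exact hd
  have hconst : h t = h 0 := by
    refine (convex_ball (0:ℂ) r).is_const_of_fderivWithin_eq_zero (𝕜 := ℂ)
      (fun y hy => ((hder y hy).differentiableAt).differentiableWithinAt) ?_ ?_ ?_
    · intro y hy
      have hopen := Metric.isOpen_ball (x := (0:ℂ)) (ε := r)
      rw [fderivWithin_of_isOpen hopen hy]
      have := (hder y hy).hasFDerivAt.fderiv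
      rw [this]
      exact ContinuousLinearMap.ext fun z => by simp
    · simpa [Metric.mem_ball, dist_zero_right] using htr
    · simpa [Metric.mem_ball] using hr0
  have hg0 : g 0 = 1 := by
    simp only [hg]
    rw [tsum_eq_single 0 (fun m hm => by simp [zero_pow hm])]
    simp [pochC_zero]
  have hh0 : h 0 = 1 := by
    simp only [hh]
    simp only [sub_zero, Complex.one_cpow, one_mul]
    exact hg0
  have : (1 - t) ^ a * g t = 1 := by
    calc (1 - t) ^ a * g t = (1 - (0:ℂ)) ^ a * g 0 := by simpa only [hh] using hconst
      _ = 1 := by rw [hg0]; simp [Complex.one_cpow]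
  rw [mul_comm] at this
  exact this

/-- Regularized Gauss hypergeometric function `₂F̃₁(a,b;c;z) = ∑ (a)_k (b)_k / Γ(c+k) · z^k/k!`. -/
noncomputable def hyp2F1reg (a b c z : ℂ) : ℂ :=
  ∑' k : ℕ, pochC a k * pochC b k / (Complex.Gamma (c + k) * (k.factorial : ℂ)) * z ^ k

theorem reg_reduction_second_diff (n : ℕ) (t : ℂ) (ht : ‖t‖ < 1) :
    hyp2F1reg (1/2) 1 (1 - n) t =
      pochC (1/2) n / (1 - t) ^ ((1 : ℂ)/2) * (t / (1 - t)) ^ n := by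
  have h1t : (1:ℂ) - t ≠ 0 := by
    rw [sub_ne_zero]
    intro h
    rw [← h] at ht
    simp at ht
  set f : ℕ → ℂ := fun k => pochC (1/2) k * pochC 1 k /
    (Complex.Gamma ((1 - (n:ℂ)) + k) * (k.factorial : ℂ)) * t ^ k with hf
  have hzero : ∀ k < n, f k = 0 := by
    intro k hk
    obtain ⟨j, hj⟩ : ∃ j, n = k + 1 + j := ⟨n - (k + 1), by omega⟩
    have hG : (1 - (n:ℂ)) + (k:ℂ) = -((j:ℕ):ℂ) := by rw [hj]; push_cast; ring
    simp only [hf]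
    rw [hG, Complex.Gamma_neg_nat_eq_zero, zero_mul, div_zero, zero_mul]
  set a' : ℂ := 1/2 + n with ha'
  set C : ℂ := pochC (1/2) n * t ^ n with hC
  have hkey : ∀ m : ℕ, f (m + n) = C * (pochC a' m / m.factorial * t ^ m) := by
    intro m
    have hG : Complex.Gamma ((1 - (n:ℂ)) + ((m + n : ℕ):ℂ)) = m.factorial := by
      have e : ((1:ℂ) - n) + ((m + n : ℕ):ℂ) = (m:ℂ) + 1 := by push_cast; ring
      rw [e, Complex.Gamma_nat_eq_factorial]
    simp only [hf]
    rw [hG, pochC_one]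
    rw [show m + n = n + m from Nat.add_comm m n]
    rw [pochC_add, pow_add]
    have hfac1 : ((m.factorial : ℂ)) ≠ 0 := by exact_mod_cast m.factorial_ne_zero
    have hfac2 : (((n + m).factorial : ℂ)) ≠ 0 := by exact_mod_cast (n + m).factorial_ne_zero
    rw [hC, ha']
    field_simp
  have hsum_sh : Summable (fun m : ℕ => f (m + n)) := by
    have := (summable_binom a' ht).mul_left C
    refine this.congr fun m => ?_
    exact (hkey m).symm
  have hsum : Summable f := (summable_nat_add_iff n).mp hsum_sh
  have hrange : ∑ i ∈ Finset.range n, f i = 0 :=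
    Finset.sum_eq_zero fun i hi => hzero i (Finset.mem_range.mp hi)
  have hbin := binom_eq a' ht
  have hcp : ((1 - t) ^ a') ≠ 0 := by
    intro hc
    rw [hc, mul_zero] at hbin
    exact zero_ne_one hbin
  have hexp : (1 - t) ^ a' = (1 - t) ^ ((1:ℂ)/2) * (1 - t) ^ n := by
    rw [ha', Complex.cpow_add _ _ h1t, Complex.cpow_natCast]
  calc hyp2F1reg (1/2) 1 (1 - n) t = ∑' k : ℕ, f k := by rw [hyp2F1reg]
    _ = (∑ i ∈ Finset.range n, f i) + ∑' m : ℕ, f (m + n) := (Summable.sum_add_tsum_nat_add n hsum).symm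
    _ = ∑' m : ℕ, f (m + n) := by rw [hrange, zero_add]
    _ = ∑' m : ℕ, C * (pochC a' m / m.factorial * t ^ m) := tsum_congr hkey
    _ = C * ∑' m : ℕ, pochC a' m / m.factorial * t ^ m := tsum_mul_left
    _ = pochC (1/2) n / (1 - t) ^ ((1:ℂ)/2) * (t / (1 - t)) ^ n := by
        refine mul_right_cancel₀ hcp ?_
        rw [mul_assoc, hbin, mul_one, hC]
        rw [div_pow, hexp]
        have hhalf : (1 - t) ^ ((1:ℂ)/2) ≠ 0 := by
          intro hc
          rw [hexp, hc, zero_mul] at hcp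
          exact hcp rfl
        have hpown : ((1 - t):ℂ) ^ n ≠ 0 := pow_ne_zero n h1t
        field_simp
end

section
/- For positive integers n and real x, p with p > 0: ∫_0^∞ e^{-pt} t^{-1/2 - n} γ(n, xt) dt = (-√π (n-1)! (-p)^{n-1} / (1/2)_n) · [√p - √(p+x) · ∑_{k=0}^{n-1} ((1/2)_k / k!) (-x/p)^k], provided p + x > 0. -/
open scoped BigOperators Real

open MeasureTheory Set

/-- Pochhammer symbol `(a)_k` on `ℝ`. -/
noncomputable def pochR (a : ℝ) (k : ℕ) : ℝ := ∏ i ∈ Finset.range k, (a + i)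

/-- Lower incomplete gamma function `γ(n, z) = ∫_0^z u^{n-1} e^{-u} du`. -/
noncomputable def lowerGamma (ν z : ℝ) : ℝ :=
  ∫ u in (0 : ℝ)..z, u ^ (ν - 1) * Real.exp (-u)


lemma pochR_pos {a : ℝ} (ha : 0 < a) (k : ℕ) : 0 < pochR a k :=
  Finset.prod_pos fun i _ => by positivity

lemma pochR_succ (a : ℝ) (k : ℕ) : pochR a (k+1) = pochR a k * (a + k) :=
  Finset.prod_range_succ _ _

lemma lin_pos {x p : ℝ} (hp : 0 < p) (hpx : 0 < p + x) {s : ℝ} (h0 : 0 ≤ s) (h1 : s ≤ 1) :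
    0 < p + x * s := by
  rcases le_or_gt 0 x with hx | hx
  · nlinarith
  · nlinarith

lemma lin_ge_min {x p : ℝ} {s : ℝ} (h0 : 0 ≤ s) (h1 : s ≤ 1) :
    min p (p + x) ≤ p + x * s := by
  rcases le_or_gt 0 x with hx | hx
  · nlinarith [min_le_left p (p+x)]
  · nlinarith [min_le_right p (p+x)]

lemma cont_inv_sqrt (x p : ℝ) (hp : 0 < p) (hpx : 0 < p + x) :
    ContinuousOn (fun s : ℝ => (Real.sqrt (p + x*s))⁻¹) (Set.uIcc 0 1) := by
  rw [Set.uIcc_of_le zero_le_one]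
  refine ContinuousOn.inv₀ ((Real.continuous_sqrt.comp (by continuity)).continuousOn) ?_
  intro s hs
  exact (Real.sqrt_pos.2 (lin_pos hp hpx hs.1 hs.2)).ne'

lemma hasDerivAt_sqrt_lin (x p : ℝ) {s : ℝ} (h : 0 < p + x*s) :
    HasDerivAt (fun s => Real.sqrt (p + x*s)) (x / (2 * Real.sqrt (p + x*s))) s := by
  have h1 : HasDerivAt (fun s : ℝ => p + x*s) x s := by
    simpa using ((hasDerivAt_id s).const_mul x).const_add p
  have h2 := (Real.hasDerivAt_sqrt h.ne').comp s h1
  refine h2.congr_deriv ?_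
  ring

lemma rpow_neg_half_eq : (fun t : ℝ => t ^ (-(1:ℝ)/2)) = fun t => (Real.sqrt t)⁻¹ := by
  funext t
  rcases lt_trichotomy t 0 with ht | ht | ht
  · rw [Real.rpow_def_of_neg ht, Real.sqrt_eq_zero_of_nonpos ht.le, inv_zero]
    have : Real.cos (-(1:ℝ)/2 * π) = 0 := by
      rw [show (-(1:ℝ)/2 * π) = -(π/2) by ring, Real.cos_neg, Real.cos_pi_div_two]
    rw [this, mul_zero]
  · subst ht
    rw [Real.zero_rpow (by norm_num), Real.sqrt_zero, inv_zero]
  · rw [show (-(1:ℝ)/2) = -(1/2 : ℝ) by ring, Real.rpow_neg ht.le, Real.sqrt_eq_rpow]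

lemma ii_pow_inv_sqrt (x p : ℝ) (hp : 0 < p) (hpx : 0 < p + x) (k : ℕ) (c : ℝ) :
    IntervalIntegrable (fun s : ℝ => c * (s ^ k * (Real.sqrt (p + x*s))⁻¹)) volume 0 1 := by
  apply ContinuousOn.intervalIntegrable
  exact (continuousOn_const.mul (((continuous_pow k).continuousOn).mul (cont_inv_sqrt x p hp hpx)))

lemma base_ftc (x p : ℝ) (hp : 0 < p) (hpx : 0 < p + x) :
    x * ∫ s in (0:ℝ)..1, (Real.sqrt (p + x*s))⁻¹ = 2*Real.sqrt (p+x) - 2*Real.sqrt p := by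
  rw [← intervalIntegral.integral_const_mul]
  have h : ∀ s ∈ Set.uIcc (0:ℝ) 1, HasDerivAt (fun s => 2 * Real.sqrt (p + x*s))
      (x * (Real.sqrt (p + x*s))⁻¹) s := by
    intro s hs
    rw [Set.uIcc_of_le zero_le_one] at hs
    have hpos := lin_pos hp hpx hs.1 hs.2
    have hne : Real.sqrt (p+x*s) ≠ 0 := (Real.sqrt_pos.2 hpos).ne'
    have h2 := (hasDerivAt_sqrt_lin x p hpos).const_mul 2
    refine h2.congr_deriv ?_
    field_simp
  have hii : IntervalIntegrable (fun s : ℝ => x * (Real.sqrt (p + x*s))⁻¹) volume 0 1 :=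
    (continuousOn_const.mul (cont_inv_sqrt x p hp hpx)).intervalIntegrable
  rw [intervalIntegral.integral_eq_sub_of_hasDerivAt h hii]
  norm_num

lemma recursion (x p : ℝ) (hp : 0 < p) (hpx : 0 < p + x) (m : ℕ) :
    ((m:ℝ)+1) * p * (∫ s in (0:ℝ)..1, s ^ m * (Real.sqrt (p + x*s))⁻¹)
      + x * (((m:ℝ)+1) + 1/2) * (∫ s in (0:ℝ)..1, s ^ (m+1) * (Real.sqrt (p + x*s))⁻¹)
    = Real.sqrt (p + x) := by
  rw [← intervalIntegral.integral_const_mul, ← intervalIntegral.integral_const_mul,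
    ← intervalIntegral.integral_add (ii_pow_inv_sqrt x p hp hpx m _)
      (ii_pow_inv_sqrt x p hp hpx (m+1) _)]
  have h : ∀ s ∈ Set.uIcc (0:ℝ) 1, HasDerivAt (fun s => s^(m+1) * Real.sqrt (p + x*s))
      (((m:ℝ)+1) * p * (s ^ m * (Real.sqrt (p + x*s))⁻¹)
        + x * (((m:ℝ)+1) + 1/2) * (s ^ (m+1) * (Real.sqrt (p + x*s))⁻¹)) s := by
    intro s hs
    rw [Set.uIcc_of_le zero_le_one] at hs
    have hpos := lin_pos hp hpx hs.1 hs.2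
    have hne : Real.sqrt (p+x*s) ≠ 0 := (Real.sqrt_pos.2 hpos).ne'
    have hsq : Real.sqrt (p+x*s) * Real.sqrt (p+x*s) = p + x*s := Real.mul_self_sqrt hpos.le
    have h2 := (hasDerivAt_pow (m+1) s).mul (hasDerivAt_sqrt_lin x p hpos)
    refine h2.congr_deriv ?_
    have hkey : Real.sqrt (p+x*s) = (p+x*s) * (Real.sqrt (p+x*s))⁻¹ := by
      field_simp [hsq]
      exact Real.sq_sqrt hpos.le
    have hrw : ((m+1:ℕ):ℝ)*s^(m+1-1)*Real.sqrt (p+x*s)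
        = ((m:ℝ)+1)*s^m*((p+x*s)*(Real.sqrt (p+x*s))⁻¹) := by
      rw [Nat.add_sub_cancel, ← hkey]; push_cast; ring
    rw [hrw]
    ring
  have hii : IntervalIntegrable (fun s : ℝ =>
      ((m:ℝ)+1) * p * (s ^ m * (Real.sqrt (p + x*s))⁻¹)
        + x * (((m:ℝ)+1) + 1/2) * (s ^ (m+1) * (Real.sqrt (p + x*s))⁻¹)) volume 0 1 :=
    (ii_pow_inv_sqrt x p hp hpx m _).add (ii_pow_inv_sqrt x p hp hpx (m+1) _)
  rw [intervalIntegral.integral_eq_sub_of_hasDerivAt h hii]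
  norm_num

lemma key (x p : ℝ) (hp : 0 < p) (hpx : 0 < p + x) :
    ∀ n : ℕ, 1 ≤ n →
    x ^ n * ∫ s in (0:ℝ)..1, s ^ (n-1) * (Real.sqrt (p + x*s))⁻¹ =
    (-1:ℝ)^n * ((n-1).factorial : ℝ) * p^(n-1) / pochR (1/2) n *
      (Real.sqrt p - Real.sqrt (p+x) *
        ∑ k ∈ Finset.range n, pochR (1/2) k / (k.factorial : ℝ) * (-x / p) ^ k) := by
  intro n hn
  induction n, hn using Nat.le_induction with
  | base =>
    simp only [pow_one, Nat.sub_self, Nat.factorial_zero, pow_zero, Finset.sum_range_one,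
      Nat.cast_one, one_mul, mul_one]
    have h1 : pochR (1/2) 1 = 1/2 := by simp [pochR]
    have h0 : pochR (1/2) 0 = 1 := by simp [pochR]
    rw [h1, h0]
    have := base_ftc x p hp hpx
    rw [this]
    ring
  | succ n hn ih =>
    obtain ⟨m, rfl⟩ : ∃ m, n = m + 1 := ⟨n-1, (Nat.sub_add_cancel hn).symm⟩
    simp only [Nat.add_sub_cancel] at ih ⊢
    have hrec := recursion x p hp hpx m
    set J : ℝ := ∫ s in (0:ℝ)..1, s ^ m * (Real.sqrt (p + x*s))⁻¹ with hJ
    set J' : ℝ := ∫ s in (0:ℝ)..1, s ^ (m+1) * (Real.sqrt (p + x*s))⁻¹ with hJ'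
    have h2 : x^(m+1+1) * J' * (((m:ℝ)+1)+1/2) = x^(m+1)*Real.sqrt (p+x)
        - ((m:ℝ)+1)*p*(x^(m+1)*J) := by
      push_cast
      linear_combination (x^(m+1)) * hrec
    rw [ih] at h2
    have hP : pochR (1/2) (m+1) ≠ 0 := (pochR_pos (by norm_num) _).ne'
    have hscale : ((m:ℝ)+1)+1/2 ≠ 0 := by positivity
    have hfac : ((m+1).factorial : ℝ) ≠ 0 := Nat.cast_ne_zero.2 (Nat.factorial_ne_zero _)
    have hfacm : ((m).factorial : ℝ) ≠ 0 := Nat.cast_ne_zero.2 (Nat.factorial_ne_zero _)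
    have hterm : (-x/p)^(m+1) = (-1:ℝ)^(m+1) * x^(m+1) / p^(m+1) := by
      rw [neg_div, neg_pow, div_pow]; ring
    rw [Finset.sum_range_succ, pochR_succ, hterm]
    have hfs : ((m+1).factorial : ℝ) = ((m:ℝ)+1) * (m.factorial : ℝ) := by
      rw [Nat.factorial_succ]; push_cast; ring
    have hgoal : x^(m+1+1) * J' = (x^(m+1)*Real.sqrt (p+x)
        - ((m:ℝ)+1)*p*((-1:ℝ)^(m+1) * ((m).factorial : ℝ) * p^m / pochR (1/2) (m+1) *
          (Real.sqrt p - Real.sqrt (p+x) *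
            ∑ k ∈ Finset.range (m+1), pochR (1/2) k / (k.factorial : ℝ) * (-x / p) ^ k)))
        / (((m:ℝ)+1)+1/2) := by
      rw [eq_div_iff hscale]; linarith [h2]
    rw [hgoal, hfs]
    have hp' : p ≠ 0 := hp.ne'
    rcases Nat.even_or_odd m with hm | hm
    · have hE : (-1:ℝ)^m = 1 := Even.neg_one_pow hm
      simp only [pow_succ, hE, one_mul]
      set S := ∑ k ∈ Finset.range (m+1), pochR (1/2) k / (k.factorial : ℝ) * (-x / p) ^ k
      push_cast
      field_simp
      ring
    · have hE : (-1:ℝ)^m = -1 := Odd.neg_one_pow hm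
      simp only [pow_succ, hE, neg_mul, one_mul, neg_neg]
      set S := ∑ k ∈ Finset.range (m+1), pochR (1/2) k / (k.factorial : ℝ) * (-x / p) ^ k
      push_cast
      field_simp
      ring

lemma lowerGamma_eq (n : ℕ) (hn : 1 ≤ n) (z : ℝ) :
    lowerGamma n z = z ^ n * ∫ s in (0:ℝ)..1, s ^ (n-1) * Real.exp (-(s*z)) := by
  obtain ⟨m, rfl⟩ : ∃ m, n = m + 1 := ⟨n-1, (Nat.sub_add_cancel hn).symm⟩
  simp only [Nat.add_sub_cancel]
  unfold lowerGamma
  have h1 : ∀ u : ℝ, u ^ (((m+1:ℕ):ℝ) - 1) * Real.exp (-u) = u ^ m * Real.exp (-u) := by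
    intro u
    rw [show ((m+1:ℕ):ℝ) - 1 = (m:ℝ) by push_cast; ring, Real.rpow_natCast]
  rw [intervalIntegral.integral_congr (fun u _ => h1 u)]
  have h2 := intervalIntegral.smul_integral_comp_mul_right
    (fun u : ℝ => u ^ m * Real.exp (-u)) (a := 0) (b := 1) z
  simp only [zero_mul, one_mul, smul_eq_mul] at h2
  rw [← h2]
  rw [show (fun s : ℝ => (s*z) ^ m * Real.exp (-(s*z))) = fun s : ℝ => z^m * (s ^ m * Real.exp (-(s*z))) from by
    funext s; rw [mul_pow]; ring]
  rw [intervalIntegral.integral_const_mul]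
  ring

lemma inner_int {a : ℝ} (ha : 0 < a) :
    ∫ t in Set.Ioi (0:ℝ), t ^ (-(1:ℝ)/2) * Real.exp (-(a*t)) = Real.sqrt π * (Real.sqrt a)⁻¹ := by
  have h := Real.integral_rpow_mul_exp_neg_mul_Ioi (a := (1/2:ℝ)) (r := a) (by norm_num) ha
  rw [show ((1:ℝ)/2 - 1 : ℝ) = -(1:ℝ)/2 by norm_num] at h
  rw [h, Real.Gamma_one_half_eq, ← Real.sqrt_eq_rpow, one_div, Real.sqrt_inv]; ring

lemma integrableOn_g {m : ℝ} (hm : 0 < m) :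
    IntegrableOn (fun t : ℝ => t ^ (-(1:ℝ)/2) * Real.exp (-(m*t))) (Set.Ioi 0) := by
  have := integrableOn_rpow_mul_exp_neg_mul_rpow
    (by norm_num : (-1:ℝ) < -(1:ℝ)/2) (by norm_num : (0:ℝ) < 1) hm
  simpa [Real.rpow_one, neg_mul] using this

lemma F_integrable (n : ℕ) (x p : ℝ) (hp : 0 < p) (hpx : 0 < p + x) :
    Integrable (fun z : ℝ × ℝ => z.2 ^ (n-1) * (z.1 ^ (-(1:ℝ)/2) * Real.exp (-((p + x*z.2)*z.1))))
      ((volume.restrict (Set.Ioi (0:ℝ))).prod (volume.restrict (Set.Ioc (0:ℝ) 1))) := by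
  have hmin : 0 < min p (p+x) := lt_min hp hpx
  have hmeas : AEStronglyMeasurable
      (fun z : ℝ × ℝ => z.2 ^ (n-1) * (z.1 ^ (-(1:ℝ)/2) * Real.exp (-((p + x*z.2)*z.1))))
      ((volume.restrict (Set.Ioi (0:ℝ))).prod (volume.restrict (Set.Ioc (0:ℝ) 1))) := by
    apply Measurable.aestronglyMeasurable
    have hm1 : Measurable (fun z : ℝ × ℝ => z.1 ^ (-(1:ℝ)/2)) := by
      have : (fun z : ℝ × ℝ => z.1 ^ (-(1:ℝ)/2)) = fun z : ℝ × ℝ => (Real.sqrt z.1)⁻¹ := by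
        funext z; rw [show (z.1 : ℝ) ^ (-(1:ℝ)/2) = (fun t : ℝ => t ^ (-(1:ℝ)/2)) z.1 from rfl,
          rpow_neg_half_eq]
      rw [this]
      exact (Real.continuous_sqrt.measurable.comp measurable_fst).inv
    exact (measurable_snd.pow_const _).mul
      (hm1.mul
        (((measurable_const.add (measurable_snd.const_mul x)).mul measurable_fst).neg.exp))
  rw [MeasureTheory.integrable_prod_iff hmeas]
  constructor
  · refine Filter.Eventually.of_forall (fun t => ?_)
    apply Continuous.integrableOn_Ioc
    continuity
  · have hg := integrableOn_g hmin
    apply Integrable.mono' hg hmeas.norm.integral_prod_right'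
    refine (MeasureTheory.ae_restrict_iff' measurableSet_Ioi).2
      (Filter.Eventually.of_forall fun t ht => ?_)
    rw [Set.mem_Ioi] at ht
    have hbound : ∀ s ∈ Set.Ioc (0:ℝ) 1,
        ‖‖s ^ (n-1) * (t ^ (-(1:ℝ)/2) * Real.exp (-((p + x*s)*t)))‖‖
          ≤ t ^ (-(1:ℝ)/2) * Real.exp (-(min p (p+x)*t)) := by
      intro s hs
      rw [norm_norm, norm_mul, norm_mul]
      have h1 : ‖s ^ (n-1)‖ ≤ 1 := by
        rw [Real.norm_eq_abs, abs_pow, abs_of_pos hs.1]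
        exact pow_le_one₀ hs.1.le hs.2
      have h2 : ‖t ^ (-(1:ℝ)/2)‖ = t ^ (-(1:ℝ)/2) := by
        rw [Real.norm_eq_abs, abs_of_pos (Real.rpow_pos_of_pos ht _)]
      have h3 : ‖Real.exp (-((p + x*s)*t))‖ ≤ Real.exp (-(min p (p+x)*t)) := by
        rw [Real.norm_eq_abs, Real.abs_exp, Real.exp_le_exp]
        have := lin_ge_min (x := x) (p := p) hs.1.le hs.2
        nlinarith
      calc ‖s ^ (n-1)‖ * (‖t ^ (-(1:ℝ)/2)‖ * ‖Real.exp (-((p + x*s)*t))‖)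
          ≤ 1 * (‖t ^ (-(1:ℝ)/2)‖ * ‖Real.exp (-((p + x*s)*t))‖) := by
            apply mul_le_mul_of_nonneg_right h1 (by positivity)
        _ = ‖t ^ (-(1:ℝ)/2)‖ * ‖Real.exp (-((p + x*s)*t))‖ := one_mul _
        _ ≤ t ^ (-(1:ℝ)/2) * Real.exp (-(min p (p+x)*t)) := by
            rw [h2]
            exact mul_le_mul_of_nonneg_left h3 (by positivity)
    have := MeasureTheory.norm_setIntegral_le_of_norm_le_const (μ := volume)
      (s := Set.Ioc (0:ℝ) 1) (by simp) hbound
    calc ‖∫ s in Set.Ioc (0:ℝ) 1, ‖s ^ (n-1) * (t ^ (-(1:ℝ)/2) * Real.exp (-((p + x*s)*t)))‖‖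
        ≤ (t ^ (-(1:ℝ)/2) * Real.exp (-(min p (p+x)*t))) * (volume (Set.Ioc (0:ℝ) 1)).toReal := this
      _ = t ^ (-(1:ℝ)/2) * Real.exp (-(min p (p+x)*t)) := by
          simp [Real.volume_Ioc]

theorem integral_lowerGamma_two (n : ℕ) (hn : 1 ≤ n) (x p : ℝ) (hp : 0 < p) (hpx : 0 < p + x) :
    ∫ t in Set.Ioi (0 : ℝ), Real.exp (-p * t) * t ^ (-(1 : ℝ)/2 - n) * lowerGamma n (x * t) =
      -Real.sqrt π * ((n - 1).factorial : ℝ) * (-p) ^ (n - 1) / pochR (1/2) n *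
        (Real.sqrt p - Real.sqrt (p + x) *
          ∑ k ∈ Finset.range n, pochR (1/2) k / (k.factorial : ℝ) * (-x / p) ^ k) := by
  have step1 : ∀ t ∈ Set.Ioi (0:ℝ),
      Real.exp (-p * t) * t ^ (-(1:ℝ)/2 - n) * lowerGamma n (x*t)
      = x ^ n * ∫ s in Set.Ioc (0:ℝ) 1,
          s ^ (n-1) * (t ^ (-(1:ℝ)/2) * Real.exp (-((p + x*s)*t))) := by
    intro t ht
    rw [Set.mem_Ioi] at ht
    rw [lowerGamma_eq n hn (x*t), ← intervalIntegral.integral_of_le zero_le_one, mul_pow]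
    rw [show (∫ s in (0:ℝ)..1, s ^ (n-1) * (t ^ (-(1:ℝ)/2) * Real.exp (-((p + x*s)*t))))
        = ∫ s in (0:ℝ)..1, (t ^ (-(1:ℝ)/2) * Real.exp (-p*t)) * (s ^ (n-1) * Real.exp (-(s*(x*t)))) from
      intervalIntegral.integral_congr (fun s _ => by
        rw [show (-((p + x*s)*t)) = (-p*t) + (-(s*(x*t))) by ring, Real.exp_add]; ring)]
    rw [intervalIntegral.integral_const_mul]
    have hpow : t ^ (-(1:ℝ)/2 - (n:ℝ)) * t ^ (n:ℕ) = t ^ (-(1:ℝ)/2) := by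
      rw [← Real.rpow_natCast t n, ← Real.rpow_add ht]
      norm_num
    linear_combination (Real.exp (-p*t) * x^n * (∫ s in (0:ℝ)..1, s ^ (n-1) * Real.exp (-(s*(x*t))))) * hpow
  rw [MeasureTheory.setIntegral_congr_fun measurableSet_Ioi step1,
    MeasureTheory.integral_const_mul]
  rw [MeasureTheory.integral_integral_swap (F_integrable n x p hp hpx)]
  have step3 : ∀ s ∈ Set.Ioc (0:ℝ) 1,
      (∫ t in Set.Ioi (0:ℝ), s ^ (n-1) * (t ^ (-(1:ℝ)/2) * Real.exp (-((p + x*s)*t))))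
      = Real.sqrt π * (s ^ (n-1) * (Real.sqrt (p + x*s))⁻¹) := by
    intro s hs
    rw [MeasureTheory.integral_const_mul, inner_int (lin_pos hp hpx hs.1.le hs.2)]
    ring
  rw [MeasureTheory.setIntegral_congr_fun measurableSet_Ioc step3,
    MeasureTheory.integral_const_mul, ← intervalIntegral.integral_of_le zero_le_one]
  have hkey := key x p hp hpx n hn
  rcases Nat.even_or_odd (n-1) with hm | hm
  · have hE : (-1:ℝ)^(n-1) = 1 := Even.neg_one_pow hm
    have hE' : (-p:ℝ)^(n-1) = p^(n-1) := Even.neg_pow hm p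
    have hEn : (-1:ℝ)^n = -1 := by
      obtain ⟨m, rfl⟩ : ∃ m, n = m + 1 := ⟨n-1, (Nat.sub_add_cancel hn).symm⟩
      simp only [Nat.add_sub_cancel] at hE
      rw [pow_succ, hE]; ring
    rw [hEn] at hkey
    rw [hE']
    linear_combination (Real.sqrt π) * hkey
  · have hE' : (-p:ℝ)^(n-1) = -p^(n-1) := Odd.neg_pow hm p
    have hEn : (-1:ℝ)^n = 1 := by
      obtain ⟨m, rfl⟩ : ∃ m, n = m + 1 := ⟨n-1, (Nat.sub_add_cancel hn).symm⟩
      simp only [Nat.add_sub_cancel] at hm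
      rw [pow_succ, Odd.neg_one_pow hm]; ring
    rw [hEn] at hkey
    rw [hE']
    linear_combination (Real.sqrt π) * hkey
end
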